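/- Fix d ≥ 1, A ∈ 𝓡, r ≥ 0, and T ∈ (0,∞) with m(T) > 0. Suppose Assumption 1.1 holds, Assumption 3.2 holds at T, the claim vectors {X^(i), i ≥ 1} are RD_A, and the tail F̄_A(x) := P(X ∈ x·A) is positive for every x > 0. Define J_x(T) := Σ_{i≥1} 1{X^(i) e^{−r τ_i} ∈ x·A, τ_i ≤ T} and Λ_x := E[J_x(T)] = ∫_{[0,T]} P(X e^{−r s} ∈ x·A) ν(ds). Then Λ_x > 0 for all x > 0, Λ_x → 0 as x → ∞, and P(J_x(T) ≥ 2) = O(Λ_x²) = o(Λ_x) as x → ∞. -/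

import Mathlib

open MeasureTheory ProbabilityTheory Filter Topology Set
open scoped Pointwise ENNReal NNReal

noncomputable section

/-- The family `𝓡` of open increasing subsets of `ℝ^d` with convex complement,
whose closure avoids the origin. -/
def InRfam (d : ℕ) (A : Set (Fin d → ℝ)) : Prop :=
  IsOpen A ∧ (∀ x ∈ A, ∀ z : Fin d → ℝ, (∀ i, 0 ≤ z i) → x + z ∈ A) ∧
    Convex ℝ Aᶜ ∧ (0 : Fin d → ℝ) ∉ closure A

/-- The functional `z ↦ z_A = sup {u > 0 : z ∈ u • A}` (real `sSup`, so `sup ∅ = 0`). -/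
def projA {d : ℕ} (A : Set (Fin d → ℝ)) (z : Fin d → ℝ) : ℝ :=
  sSup {u : ℝ | 0 < u ∧ z ∈ u • A}

/-- The tail `Ḡ_A(x) = P(Z_A > x)` of the one-dimensional distribution `G_A`
associated with a distribution `G` on `ℝ^d` and a set `A ∈ 𝓡`. -/
def tailA {d : ℕ} (A : Set (Fin d → ℝ)) (G : Measure (Fin d → ℝ)) (x : ℝ) : ℝ :=
  (G {z | x < projA A z}).toReal

/-- Product of two measures (via `bind`, no instance assumptions). -/
def mprod {α β : Type*} [MeasurableSpace α] [MeasurableSpace β]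
    (μ : Measure α) (ν : Measure β) : Measure (α × β) :=
  μ.bind fun a => ν.map (Prod.mk a)

/-- Tail at `x` of `Z¹_A + Z²_A` for independent `Z¹ ∼ G₁`, `Z² ∼ G₂`. -/
def tail2A {d : ℕ} (A : Set (Fin d → ℝ)) (G₁ G₂ : Measure (Fin d → ℝ)) (x : ℝ) : ℝ :=
  ((mprod G₁ G₂) {p | x < projA A p.1 + projA A p.2}).toReal

/-- `G ∈ 𝒮_A`: the distribution `G_A` has everywhere positive tail and is
subexponential, i.e. `P(Z¹_A + Z²_A > x) ∼ 2 Ḡ_A(x)` for independent copies. -/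
def SubexpA {d : ℕ} (A : Set (Fin d → ℝ)) (G : Measure (Fin d → ℝ)) : Prop :=
  (∀ x : ℝ, 0 < tailA A G x) ∧
    Tendsto (fun x => tail2A A G G x / tailA A G x) atTop (𝓝 2)

/-- Convolution: the law of the sum of independent draws from `μ` and `ν`. -/
def mconv {d : ℕ} (μ ν : Measure (Fin d → ℝ)) : Measure (Fin d → ℝ) :=
  (mprod μ ν).map fun p => p.1 + p.2

/-- Regression dependence with explicit constants `x₀, K`, in integrated form:
for every index `i`, finite nonempty `J` not containing `i`, level `xi > x₀` and
measurable set `S` of conditioning values all `> x₀`,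
`P(Z_i > xi, (Z_j)_{j∈J} ∈ S) ≤ K · Ḡ_i(xi) · P((Z_j)_{j∈J} ∈ S)`. -/
def RDwith {Ω : Type*} [MeasurableSpace Ω] (P : Measure Ω) (x₀ K : ℝ)
    {ι : Type*} (Z : ι → Ω → ℝ) : Prop :=
  ∀ i : ι, ∀ J : Finset ι, J.Nonempty → i ∉ J → ∀ xi : ℝ, x₀ < xi →
    ∀ S : Set (J → ℝ), MeasurableSet S → (∀ v ∈ S, ∀ j : J, x₀ < v j) →
      (P {ω | xi < Z i ω ∧ (fun j : J => Z j.1 ω) ∈ S}).toReal ≤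
        K * (P {ω | xi < Z i ω}).toReal * (P {ω | (fun j : J => Z j.1 ω) ∈ S}).toReal

/-- Regression dependence (`RD`). -/
def RD {Ω : Type*} [MeasurableSpace Ω] (P : Measure Ω) {ι : Type*} (Z : ι → Ω → ℝ) : Prop :=
  ∃ x₀ > (0 : ℝ), ∃ K > (0 : ℝ), RDwith P x₀ K Z

/-- `RD_A` for random vectors: the projections `Z^{(i)}_A` are `RD`. -/
def RDA {Ω : Type*} [MeasurableSpace Ω] (P : Measure Ω) {d : ℕ} (A : Set (Fin d → ℝ))
    {ι : Type*} (Z : ι → Ω → Fin d → ℝ) : Prop :=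
  RD P fun i ω => projA A (Z i ω)

/-- Quasi asymptotic independence (`QAI`). -/
def QAI {Ω : Type*} [MeasurableSpace Ω] (P : Measure Ω) {ι : Type*} (Z : ι → Ω → ℝ) : Prop :=
  ∀ i j : ι, i ≠ j →
    Tendsto (fun x : ℝ => (P {ω | x < Z i ω ∧ x < Z j ω}).toReal /
      ((P {ω | x < Z i ω}).toReal + (P {ω | x < Z j ω}).toReal)) atTop (𝓝 0)

/-- `QAI_A` for random vectors: the projections `Z^{(i)}_A` are `QAI`. -/
def QAIA {Ω : Type*} [MeasurableSpace Ω] (P : Measure Ω) {d : ℕ} (A : Set (Fin d → ℝ))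
    {ι : Type*} (Z : ι → Ω → Fin d → ℝ) : Prop :=
  QAI P fun i ω => projA A (Z i ω)

/-- The consistent variation class `𝒞` for a tail function `g`. -/
def ClassC (g : ℝ → ℝ) : Prop :=
  Tendsto (fun b : ℝ => limsup (fun x => g (b * x) / g x) atTop) (𝓝[<] (1 : ℝ)) (𝓝 1)

/-- The positively decreasing class `𝒫_𝒟` for a tail function `g`. -/
def ClassPD (g : ℝ → ℝ) : Prop :=
  ∃ v > (1 : ℝ), limsup (fun x => g (v * x) / g x) atTop < 1

/-- Upper Matuszewska index of a tail function. -/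
def Jplus (g : ℝ → ℝ) : ℝ :=
  -limUnder atTop fun v : ℝ => Real.log (liminf (fun x => g (v * x) / g x) atTop) / Real.log v

/-- Lower Matuszewska index of a tail function. -/
def Jminus (g : ℝ → ℝ) : ℝ :=
  -limUnder atTop fun v : ℝ => Real.log (limsup (fun x => g (v * x) / g x) atTop) / Real.log v

/-- `F ∈ MRV(α, μ)` with associated regularly varying tail `Vbar`: `Vbar` is the
tail of a distribution on `ℝ`, regularly varying with index `−α`; `μ` is a nonzero
measure, finite on Borel sets at positive distance from the origin; and
`P(X ∈ x • B)/Vbar x → μ(B)` for all such `B` with `μ(∂B) = 0`. -/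
def IsMRV {d : ℕ} (F : Measure (Fin d → ℝ)) (α : ℝ) (μ : Measure (Fin d → ℝ))
    (Vbar : ℝ → ℝ) : Prop :=
  (∃ V : Measure ℝ, IsProbabilityMeasure V ∧ ∀ x : ℝ, Vbar x = (V (Ioi x)).toReal) ∧
    (∀ᶠ x in atTop, 0 < Vbar x) ∧
    (∀ t : ℝ, 0 < t → Tendsto (fun x => Vbar (t * x) / Vbar x) atTop (𝓝 (t ^ (-α)))) ∧
    μ ≠ 0 ∧
    (∀ B : Set (Fin d → ℝ), MeasurableSet B → (∃ ε > (0 : ℝ), ∀ z ∈ B, ε ≤ ‖z‖) → μ B ≠ ⊤) ∧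
    (∀ B : Set (Fin d → ℝ), MeasurableSet B → (∃ ε > (0 : ℝ), ∀ z ∈ B, ε ≤ ‖z‖) →
      μ (frontier B) = 0 →
      Tendsto (fun x => (F (x • B)).toReal / Vbar x) atTop (𝓝 ((μ B).toReal)))

/-- Second factorial moment measure `α⁽²⁾` of the point process with points `τ i`:
the mean measure of the off-diagonal pairs `(τ i, τ j)`, `i ≠ j`. -/
def secondFactorial {Ω : Type*} [MeasurableSpace Ω] (P : Measure Ω) (τ : ℕ → Ω → ℝ) :
    Measure (ℝ × ℝ) :=
  Measure.sum fun p : {p : ℕ × ℕ // p.1 ≠ p.2} =>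
    P.map fun ω => (τ p.1.1 ω, τ p.1.2 ω)

/-- The product measure `ν × ν`, where `ν(B) = ∑ᵢ P(τᵢ ∈ B)` is the mean measure. -/
def nuProd {Ω : Type*} [MeasurableSpace Ω] (P : Measure Ω) (τ : ℕ → Ω → ℝ) :
    Measure (ℝ × ℝ) :=
  Measure.sum fun p : ℕ × ℕ => mprod (P.map (τ p.1)) (P.map (τ p.2))

/-- Assumption 3.2 at horizon `T` with constant `C`:
`α⁽²⁾(B) ≤ C · (ν × ν)(B)` for every Borel `B ⊆ [0,T]²`. -/
def Assumption32 {Ω : Type*} [MeasurableSpace Ω] (P : Measure Ω) (τ : ℕ → Ω → ℝ)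
    (T C : ℝ) : Prop :=
  ∀ B : Set (ℝ × ℝ), MeasurableSet B → B ⊆ Icc (0 : ℝ) T ×ˢ Icc (0 : ℝ) T →
    secondFactorial P τ B ≤ ENNReal.ofReal C * nuProd P τ B

/-- Discounted aggregate claims up to a finite time `T`. -/
def Dfin {Ω : Type*} {d : ℕ} (r : ℝ) (X : ℕ → Ω → Fin d → ℝ) (τ : ℕ → Ω → ℝ)
    (T : ℝ) (ω : Ω) : Fin d → ℝ :=
  ∑' i : ℕ, Set.indicator {ω' | τ i ω' ≤ T} (fun ω' => Real.exp (-(r * τ i ω')) • X i ω') ω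

/-- Discounted aggregate claims over the infinite time horizon. -/
def Dinf {Ω : Type*} {d : ℕ} (r : ℝ) (X : ℕ → Ω → Fin d → ℝ) (τ : ℕ → Ω → ℝ)
    (ω : Ω) : Fin d → ℝ :=
  ∑' i : ℕ, Real.exp (-(r * τ i ω)) • X i ω

/-- `J_x(T)`: the number of discounted claims entering `x • A` by time `T`. -/
def Jcount {Ω : Type*} {d : ℕ} (r : ℝ) (X : ℕ → Ω → Fin d → ℝ) (τ : ℕ → Ω → ℝ)
    (A : Set (Fin d → ℝ)) (T x : ℝ) (ω : Ω) : ℝ≥0∞ :=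
  ∑' i : ℕ,
    Set.indicator {ω' | τ i ω' ≤ T ∧ Real.exp (-(r * τ i ω')) • X i ω' ∈ x • A}
      (fun _ => (1 : ℝ≥0∞)) ω

/-- Pathwise discounted stochastic integral `∫₀ᵗ e^{−rs} B(ds)
  = e^{−rt} B(t) + r ∫₀ᵗ e^{−rs} B(s) ds`. -/
def discBM {Ω : Type*} (r : ℝ) (Bi : ℝ → Ω → ℝ) (t : ℝ) (ω : Ω) : ℝ :=
  Real.exp (-(r * t)) * Bi t ω + r * ∫ s in (0 : ℝ)..t, Real.exp (-(r * s)) * Bi s ω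

/-- The insurer's surplus process `U(t)`. -/
def surplus {Ω : Type*} {d : ℕ} (r x : ℝ) (l : Fin d → ℝ) (c : Fin d → ℝ → Ω → ℝ)
    (δv : Fin d → ℝ) (Bm : Fin d → ℝ → Ω → ℝ) (X : ℕ → Ω → Fin d → ℝ) (τ : ℕ → Ω → ℝ)
    (t : ℝ) (ω : Ω) : Fin d → ℝ :=
  fun k => x * l k + (∫ s in (0 : ℝ)..t, Real.exp (-(r * s)) * c k s ω)
    + δv k * discBM r (Bm k) t ω - Dfin r X τ t ω k

section aux
variable {d : ℕ} {A : Set (Fin d → ℝ)}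

lemma InRfam.exists_eps (hA : InRfam d A) : ∃ ε > (0:ℝ), ∀ z ∈ A, ε ≤ ‖z‖ := by
  have h0 := hA.2.2.2
  rw [Metric.mem_closure_iff] at h0
  push_neg at h0
  obtain ⟨ε, hε, h⟩ := h0
  exact ⟨ε, hε, fun z hz => by simpa [dist_eq_norm] using h z hz⟩

lemma projA_nonneg (z : Fin d → ℝ) : 0 ≤ projA A z :=
  Real.sSup_nonneg (fun u hu => hu.1.le)

lemma mem_smul_downward (hA : InRfam d A) {z : Fin d → ℝ} (hz : ∀ k, 0 ≤ z k)
    {u v : ℝ} (hu : 0 < u) (huv : u ≤ v) (hv : z ∈ v • A) : z ∈ u • A := by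
  obtain ⟨a, ha, rfl⟩ := hv
  have hvpos : 0 < v := lt_of_lt_of_le hu huv
  have hak : ∀ k, 0 ≤ a k := by
    intro k
    have := hz k
    simp only [Pi.smul_apply, smul_eq_mul] at this
    nlinarith
  refine ⟨(v/u) • a, ?_, ?_⟩
  · have he : (v/u) • a = a + ((v/u) - 1) • a := by
      rw [sub_smul, one_smul]; abel
    rw [he]
    refine hA.2.1 a ha _ (fun k => ?_)
    have h1 : (0:ℝ) ≤ v/u - 1 := by
      rw [sub_nonneg, le_div_iff₀ hu]; linarith
    exact mul_nonneg h1 (hak k)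
  · show u • ((v/u) • a) = v • a
    rw [smul_smul, show u * (v / u) = v by field_simp]

lemma projA_bddAbove (hA : InRfam d A) (z : Fin d → ℝ) :
    BddAbove {u : ℝ | 0 < u ∧ z ∈ u • A} := by
  obtain ⟨ε, hε, hεA⟩ := hA.exists_eps
  refine ⟨‖z‖ / ε, fun u hu => ?_⟩
  obtain ⟨hu0, a, ha, rfl⟩ := hu
  rw [norm_smul, Real.norm_eq_abs, abs_of_pos hu0]
  rw [le_div_iff₀ hε]
  exact mul_le_mul_of_nonneg_left (hεA a ha) hu0.le

lemma mem_smul_iff_lt_projA (hA : InRfam d A) {z : Fin d → ℝ} (hz : ∀ k, 0 ≤ z k)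
    {u : ℝ} (hu : 0 < u) : z ∈ u • A ↔ u < projA A z := by
  constructor
  · intro h
    obtain ⟨a, ha, rfl⟩ := h
    -- find c < 1 with c • a ∈ A
    have hcont : Tendsto (fun c : ℝ => c • a) (𝓝 1) (𝓝 a) := by
      have := (continuous_id.smul (continuous_const : Continuous fun _ : ℝ => a)).tendsto (1:ℝ)
      simpa using (show Tendsto (fun c : ℝ => c • a) (𝓝 1) (𝓝 ((1:ℝ) • a)) from this)
    have hev : ∀ᶠ c : ℝ in 𝓝 1, c • a ∈ A := hcont.eventually (hA.1.mem_nhds ha)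
    obtain ⟨η, hη, hball⟩ := Metric.eventually_nhds_iff.mp hev
    set c : ℝ := 1 - min η 1 / 2 with hc
    have hc0 : 0 < c := by
      have : min η 1 ≤ 1 := min_le_right _ _
      simp only [hc]; linarith
    have hc1 : c < 1 := by
      have : 0 < min η 1 := lt_min hη one_pos
      simp only [hc]; linarith
    have hcA : c • a ∈ A := by
      apply hball
      rw [dist_eq_norm]
      have : 0 < min η 1 := lt_min hη one_pos
      have h2 : |c - 1| = min η 1 / 2 := by rw [hc]; rw [abs_of_nonpos (by linarith)]; ring
      calc ‖c - 1‖ = min η 1 / 2 := h2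
        _ < η := by have := min_le_left η 1; linarith
    have hmem : u • a ∈ (u / c) • A := by
      refine ⟨c • a, hcA, ?_⟩
      show (u / c) • (c • a) = u • a
      rw [smul_smul, show u / c * c = u by field_simp]
    have hle : u / c ≤ projA A (u • a) :=
      le_csSup (projA_bddAbove hA _) ⟨by positivity, hmem⟩
    have : u < u / c := by
      rw [lt_div_iff₀ hc0]; nlinarith
    linarith
  · intro h
    obtain ⟨u', hu', hlt⟩ := exists_lt_of_lt_csSup (by
      by_contra hne
      rw [not_nonempty_iff_eq_empty] at hne
      rw [projA, hne, Real.sSup_empty] at h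
      linarith) h
    exact mem_smul_downward hA hz hu hlt.le hu'.2

lemma measurable_projA_comp (hA : InRfam d A) {Ω : Type*} [MeasurableSpace Ω]
    {W : Ω → Fin d → ℝ} (hW : Measurable W) (hWnn : ∀ ω k, 0 ≤ W ω k) :
    Measurable (fun ω => projA A (W ω)) := by
  apply measurable_of_Ioi
  intro u
  rcases lt_trichotomy u 0 with h | h | h
  · have : (fun ω => projA A (W ω)) ⁻¹' Ioi u = univ := by
      ext ω; simp only [mem_preimage, mem_Ioi, mem_univ, iff_true]
      exact lt_of_lt_of_le h (projA_nonneg _)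
    rw [this]; exact MeasurableSet.univ
  · subst h
    have : (fun ω => projA A (W ω)) ⁻¹' Ioi 0 = ⋃ n : ℕ, W ⁻¹' (((1:ℝ)/(n+1)) • A) := by
      ext ω
      simp only [mem_preimage, mem_Ioi, mem_iUnion]
      constructor
      · intro h0
        obtain ⟨n, hn⟩ := exists_nat_one_div_lt h0
        exact ⟨n, (mem_smul_iff_lt_projA hA (hWnn ω) (by positivity)).mpr hn⟩
      · rintro ⟨n, hn⟩
        have := (mem_smul_iff_lt_projA hA (hWnn ω) (by positivity)).mp hn
        have h1 : (0:ℝ) < 1/(n+1) := by positivity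
        linarith
    rw [this]
    exact MeasurableSet.iUnion fun n =>
      hW ((hA.1.smul₀ (by positivity : (1:ℝ)/(n+1) ≠ 0)).measurableSet)
  · have : (fun ω => projA A (W ω)) ⁻¹' Ioi u = W ⁻¹' (u • A) := by
      ext ω
      simp only [mem_preimage, mem_Ioi]
      exact (mem_smul_iff_lt_projA hA (hWnn ω) h).symm
    rw [this]
    exact hW ((hA.1.smul₀ h.ne').measurableSet)

end aux

section aux2
variable {d : ℕ} {A : Set (Fin d → ℝ)}

lemma disc_mem_iff (hA : InRfam d A) {z : Fin d → ℝ} (hz : ∀ k, 0 ≤ z k)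
    {x c : ℝ} (hx : 0 < x) (hc : 0 < c) :
    c • z ∈ x • A ↔ x / c < projA A z := by
  have h1 : (x / c) • A = c⁻¹ • (x • A) := by
    rw [smul_smul]; congr 1; rw [div_eq_inv_mul]
  have h2 : z ∈ (x / c) • A ↔ c • z ∈ x • A := by
    rw [h1, mem_smul_set_iff_inv_smul_mem₀ (inv_ne_zero hc.ne'), inv_inv]
  rw [← h2, mem_smul_iff_lt_projA hA hz (by positivity)]

end aux2


section evdef
variable {Ω : Type*} {d : ℕ}

/-- The basic events `E_i(x) = {τ_i ≤ T, e^{-r τ_i} X_i ∈ x A}`. -/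
def Ev (r : ℝ) (X : ℕ → Ω → Fin d → ℝ) (τ : ℕ → Ω → ℝ) (A : Set (Fin d → ℝ))
    (T x : ℝ) (i : ℕ) : Set Ω :=
  {ω | τ i ω ≤ T ∧ Real.exp (-(r * τ i ω)) • X i ω ∈ x • A}

lemma Jcount_eq {Ω : Type*} {d : ℕ} (r : ℝ) (X : ℕ → Ω → Fin d → ℝ) (τ : ℕ → Ω → ℝ)
    (A : Set (Fin d → ℝ)) (T x : ℝ) (ω : Ω) :
    Jcount r X τ A T x ω = ∑' i : ℕ, Set.indicator (Ev r X τ A T x i) (fun _ => (1 : ℝ≥0∞)) ω :=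
  rfl

end evdef

/-- Step (1) in the proof of Theorem 3.1: `Λ_x > 0` for all `x > 0`, `Λ_x → 0`, and
`P(J_x(T) ≥ 2) = O(Λ_x²) = o(Λ_x)` as `x → ∞`. -/
theorem statement13
    {Ω : Type*} [MeasurableSpace Ω] (P : Measure Ω) [IsProbabilityMeasure P]
    {d : ℕ} (hd : 1 ≤ d) {A : Set (Fin d → ℝ)} (hA : InRfam d A)
    {r : ℝ} (hr : 0 ≤ r) {T : ℝ} (hT : 0 < T)
    (F : Measure (Fin d → ℝ)) [IsProbabilityMeasure F]
    (X : ℕ → Ω → Fin d → ℝ) (τ : ℕ → Ω → ℝ)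
    (hXmeas : ∀ i, Measurable (X i)) (hτmeas : ∀ i, Measurable (τ i))
    (hXnn : ∀ i ω k, 0 ≤ X i ω k)
    (hXdist : ∀ i, P.map (X i) = F)
    (hτnn : ∀ i ω, 0 ≤ τ i ω) (hτmono : ∀ i ω, τ i ω ≤ τ (i + 1) ω)
    (hindep : IndepFun (fun ω i => X i ω) (fun ω i => τ i ω) P)
    (hmfin : ∀ t : ℝ, (∑' i : ℕ, P {ω | τ i ω ≤ t}) ≠ ⊤)
    (hmT : 0 < ∑' i : ℕ, P {ω | τ i ω ≤ T})
    {C : ℝ} (hC : 0 ≤ C) (h32 : Assumption32 P τ T C)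
    (hRD : RDA P A X)
    (hFA : ∀ x : ℝ, 0 < x → 0 < F (x • A)) :
    (∀ x : ℝ, 0 < x →
        0 < ∑' i : ℕ, (P {ω | τ i ω ≤ T ∧ Real.exp (-(r * τ i ω)) • X i ω ∈ x • A}).toReal) ∧
      Tendsto (fun x : ℝ =>
          ∑' i : ℕ, (P {ω | τ i ω ≤ T ∧ Real.exp (-(r * τ i ω)) • X i ω ∈ x • A}).toReal)
        atTop (𝓝 0) ∧
      (∃ C' : ℝ, ∀ᶠ x : ℝ in atTop,
        (P {ω | 2 ≤ Jcount r X τ A T x ω}).toReal ≤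
          C' * (∑' i : ℕ,
            (P {ω | τ i ω ≤ T ∧ Real.exp (-(r * τ i ω)) • X i ω ∈ x • A}).toReal) ^ 2) ∧
      Tendsto (fun x : ℝ =>
          (P {ω | 2 ≤ Jcount r X τ A T x ω}).toReal /
            ∑' i : ℕ, (P {ω | τ i ω ≤ T ∧ Real.exp (-(r * τ i ω)) • X i ω ∈ x • A}).toReal)
        atTop (𝓝 0) := by
  classical
  obtain ⟨x₀, hx₀, K, hK, hRDw⟩ := hRD
  obtain ⟨ε, hε, hεA⟩ := hA.exists_eps
  -- notation
  let Z : ℕ → Ω → ℝ := fun i ω => projA A (X i ω)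
  have hZmeas : ∀ i, Measurable (Z i) := fun i =>
    measurable_projA_comp hA (hXmeas i) (hXnn i)
  have hsmulMeas : ∀ u : ℝ, u ≠ 0 → MeasurableSet (u • A) := fun u hu =>
    (hA.1.smul₀ hu).measurableSet
  -- membership criterion for the events
  have hEiff : ∀ x : ℝ, 0 < x → ∀ i (ω : Ω),
      ω ∈ Ev r X τ A T x i ↔ (τ i ω ≤ T ∧ x * Real.exp (r * τ i ω) < Z i ω) := by
    intro x hx i ω
    have hc : (0:ℝ) < Real.exp (-(r * τ i ω)) := Real.exp_pos _
    have hd := disc_mem_iff hA (hXnn i ω) hx hc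
    have hde : x / Real.exp (-(r * τ i ω)) = x * Real.exp (r * τ i ω) := by
      rw [Real.exp_neg, div_inv_eq_mul]
    rw [hde] at hd
    exact and_congr Iff.rfl hd
  -- the tail of `Z i` is `F (u • A)`
  have hFtail : ∀ (i : ℕ) (u : ℝ), 0 < u → P {ω | u < Z i ω} = F (u • A) := by
    intro i u hu
    have hpre : {ω | u < Z i ω} = X i ⁻¹' (u • A) := by
      ext ω
      simp only [Set.mem_setOf_eq, Set.mem_preimage]
      exact (mem_smul_iff_lt_projA hA (hXnn i ω) hu).symm
    rw [hpre, ← hXdist i, Measure.map_apply (hXmeas i) (hsmulMeas u hu.ne')]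
  -- the decreasing tail function `Ge` and the integrand `h`
  let Ge : ℝ → ℝ≥0∞ := fun w => F (Real.exp w • A)
  have hGeanti : Antitone Ge := by
    intro w w' hww'
    show F (Real.exp w' • A) ≤ F (Real.exp w • A)
    rw [← hXdist 0, Measure.map_apply (hXmeas 0) (hsmulMeas _ (Real.exp_ne_zero _)),
        Measure.map_apply (hXmeas 0) (hsmulMeas _ (Real.exp_ne_zero _))]
    apply measure_mono
    intro ω hω
    exact mem_smul_downward hA (hXnn 0 ω) (Real.exp_pos w) (Real.exp_le_exp.mpr hww') hω
  have hGemeas : Measurable Ge := hGeanti.measurable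
  let h : ℝ → ℝ → ℝ≥0∞ := fun x s =>
    Set.indicator (Icc (0:ℝ) T) (fun s => Ge (Real.log x + r * s)) s
  have hhmeas : ∀ x, Measurable (h x) := fun x =>
    (hGemeas.comp (measurable_const.add (measurable_const.mul measurable_id))).indicator
      measurableSet_Icc
  have hGe_eq : ∀ x : ℝ, 0 < x → ∀ s : ℝ,
      Ge (Real.log x + r * s) = F ((x * Real.exp (r * s)) • A) := by
    intro x hx s
    show F (Real.exp (Real.log x + r * s) • A) = _
    rw [Real.exp_add, Real.exp_log hx]
  -- probability measures
  have hPmapτ : ∀ i, IsProbabilityMeasure (P.map (τ i)) := fun i =>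
    Measure.isProbabilityMeasure_map (hτmeas i).aemeasurable
  -- independence of projections and arrival times
  have hindepZτ : ∀ i, IndepFun (Z i) (τ i) P := by
    intro i
    have hφ : Measurable (fun v : ℕ → (Fin d → ℝ) => projA A (fun k => max (v i k) 0)) := by
      apply measurable_projA_comp hA
      · exact measurable_pi_lambda _ fun k =>
          ((measurable_pi_apply k).comp (measurable_pi_apply i)).max measurable_const
      · intro v k; exact le_max_right _ _
    have hψ : Measurable (fun w : ℕ → ℝ => w i) := measurable_pi_apply i
    have hcomp := hindep.comp hφ hψ
    have hfeq : (fun v : ℕ → (Fin d → ℝ) => projA A (fun k => max (v i k) 0)) ∘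
        (fun ω i => X i ω) = Z i := by
      funext ω
      simp only [Function.comp_apply]
      congr 1
      funext k
      exact max_eq_left (hXnn i ω k)
    rw [hfeq] at hcomp
    exact hcomp
  have hindepZτ2 : ∀ i j, IndepFun (fun ω => (Z i ω, Z j ω)) (fun ω => (τ i ω, τ j ω)) P := by
    intro i j
    have hφi : Measurable (fun v : ℕ → (Fin d → ℝ) => projA A (fun k => max (v i k) 0)) := by
      apply measurable_projA_comp hA
      · exact measurable_pi_lambda _ fun k =>
          ((measurable_pi_apply k).comp (measurable_pi_apply i)).max measurable_const
      · intro v k; exact le_max_right _ _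
    have hφj : Measurable (fun v : ℕ → (Fin d → ℝ) => projA A (fun k => max (v j k) 0)) := by
      apply measurable_projA_comp hA
      · exact measurable_pi_lambda _ fun k =>
          ((measurable_pi_apply k).comp (measurable_pi_apply j)).max measurable_const
      · intro v k; exact le_max_right _ _
    have hψ : Measurable (fun w : ℕ → ℝ => (w i, w j)) :=
      (measurable_pi_apply i).prodMk (measurable_pi_apply j)
    have hcomp := hindep.comp (hφi.prodMk hφj) hψ
    have hfeq : (fun v : ℕ → (Fin d → ℝ) =>
        (projA A (fun k => max (v i k) 0), projA A (fun k => max (v j k) 0))) ∘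
        (fun ω i => X i ω) = fun ω => (Z i ω, Z j ω) := by
      funext ω
      simp only [Function.comp_apply, Prod.mk.injEq]
      constructor <;> · congr 1; funext k; exact max_eq_left (hXnn _ ω k)
    rw [hfeq] at hcomp
    exact hcomp
  -- joint laws factorize
  have hmap1 : ∀ i, P.map (fun ω => (Z i ω, τ i ω)) = (P.map (Z i)).prod (P.map (τ i)) :=
    fun i => (indepFun_iff_map_prod_eq_prod_map_map (hZmeas i).aemeasurable
      (hτmeas i).aemeasurable).mp (hindepZτ i)
  have hmap2 : ∀ i j, P.map (fun ω => ((Z i ω, Z j ω), (τ i ω, τ j ω))) =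
      (P.map (fun ω => (Z i ω, Z j ω))).prod (P.map (fun ω => (τ i ω, τ j ω))) :=
    fun i j => (indepFun_iff_map_prod_eq_prod_map_map
      ((hZmeas i).prodMk (hZmeas j)).aemeasurable
      ((hτmeas i).prodMk (hτmeas j)).aemeasurable).mp (hindepZτ2 i j)
  -- a.e. nonnegativity of arrival laws
  have hae_nn : ∀ i, ∀ᵐ s ∂(P.map (τ i)), 0 ≤ s := by
    intro i
    rw [ae_iff]
    have h1 : {s : ℝ | ¬ 0 ≤ s} = Iio 0 := by ext s; simp [not_le]
    rw [h1, Measure.map_apply (hτmeas i) measurableSet_Iio]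
    have h2 : τ i ⁻¹' Iio 0 = ∅ := by
      ext ω
      simp [Set.mem_preimage, (hτnn i ω).not_gt]
    rw [h2, measure_empty]
  have hae_nn2 : ∀ i j, ∀ᵐ st ∂(P.map (fun ω => (τ i ω, τ j ω))), 0 ≤ st.1 ∧ 0 ≤ st.2 := by
    intro i j
    rw [ae_iff]
    have h1 : {st : ℝ × ℝ | ¬ (0 ≤ st.1 ∧ 0 ≤ st.2)} ⊆
        {st : ℝ × ℝ | st.1 < 0} ∪ {st : ℝ × ℝ | st.2 < 0} := by
      intro st hst
      simp only [Set.mem_setOf_eq, not_and_or, not_le] at hst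
      simpa using hst
    apply measure_mono_null h1
    apply measure_union_null
    · rw [show {st : ℝ × ℝ | st.1 < 0} = Iio 0 ×ˢ (univ : Set ℝ) by ext st; simp,
        Measure.map_apply ((hτmeas i).prodMk (hτmeas j)) (measurableSet_Iio.prod MeasurableSet.univ)]
      have h2 : (fun ω => (τ i ω, τ j ω)) ⁻¹' (Iio 0 ×ˢ univ) = ∅ := by
        ext ω; simp [(hτnn i ω).not_gt]
      rw [h2, measure_empty]
    · rw [show {st : ℝ × ℝ | st.2 < 0} = (univ : Set ℝ) ×ˢ Iio 0 by ext st; simp,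
        Measure.map_apply ((hτmeas i).prodMk (hτmeas j)) (MeasurableSet.univ.prod measurableSet_Iio)]
      have h2 : (fun ω => (τ i ω, τ j ω)) ⁻¹' (univ ×ˢ Iio 0) = ∅ := by
        ext ω; simp [(hτnn j ω).not_gt]
      rw [h2, measure_empty]
  -- measurability of rectangles
  have hS1meas : ∀ x : ℝ, MeasurableSet {p : ℝ × ℝ | p.2 ≤ T ∧ x * Real.exp (r * p.2) < p.1} := by
    intro x
    apply MeasurableSet.inter
    · exact measurableSet_le measurable_snd measurable_const
    · exact measurableSet_lt
        (measurable_const.mul (Real.measurable_exp.comp (measurable_const.mul measurable_snd)))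
        measurable_fst
  -- key identity : P(E_i) as an integral against the law of τ_i
  have hPEi : ∀ x : ℝ, 0 < x → ∀ i, P (Ev r X τ A T x i) = ∫⁻ s, h x s ∂(P.map (τ i)) := by
    intro x hx i
    haveI := hPmapτ i
    haveI : IsProbabilityMeasure (P.map (Z i)) := Measure.isProbabilityMeasure_map (hZmeas i).aemeasurable
    have hpre : Ev r X τ A T x i = (fun ω => (Z i ω, τ i ω)) ⁻¹'
        {p : ℝ × ℝ | p.2 ≤ T ∧ x * Real.exp (r * p.2) < p.1} := by
      ext ω
      rw [hEiff x hx i ω]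
      simp only [Set.mem_preimage, Set.mem_setOf_eq]
    rw [hpre, ← Measure.map_apply ((hZmeas i).prodMk (hτmeas i)) (hS1meas x), hmap1 i,
      Measure.prod_apply_symm (hS1meas x)]
    apply lintegral_congr_ae
    filter_upwards [hae_nn i] with s hs
    by_cases hsT : s ≤ T
    · have hsl : (fun z => (z, s)) ⁻¹' {p : ℝ × ℝ | p.2 ≤ T ∧ x * Real.exp (r * p.2) < p.1}
          = Ioi (x * Real.exp (r * s)) := by
        ext z; simp [hsT]
      rw [hsl, Measure.map_apply (hZmeas i) measurableSet_Ioi]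
      have hio : Z i ⁻¹' Ioi (x * Real.exp (r * s)) = {ω | x * Real.exp (r * s) < Z i ω} := rfl
      rw [hio, hFtail i _ (by positivity)]
      show _ = Set.indicator (Icc (0:ℝ) T) (fun s => Ge (Real.log x + r * s)) s
      rw [Set.indicator_of_mem (Set.mem_Icc.mpr ⟨hs, hsT⟩), hGe_eq x hx s]
    · have hsl : (fun z => (z, s)) ⁻¹' {p : ℝ × ℝ | p.2 ≤ T ∧ x * Real.exp (r * p.2) < p.1}
          = ∅ := by
        ext z; simp [hsT]
      rw [hsl, measure_empty]
      show (0:ℝ≥0∞) = Set.indicator (Icc (0:ℝ) T) (fun s => Ge (Real.log x + r * s)) s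
      rw [Set.indicator_of_notMem (fun hmem => hsT hmem.2)]
    -- the RD bound in `ℝ≥0∞`
  have hRDbound : ∀ i j, i ≠ j → ∀ a b : ℝ, x₀ < a → x₀ < b →
      P {ω | a < Z i ω ∧ b < Z j ω} ≤
        ENNReal.ofReal K * P {ω | a < Z i ω} * P {ω | b < Z j ω} := by
    intro i j hij a b ha hb
    have hJ : ({j} : Finset ℕ).Nonempty := Finset.singleton_nonempty j
    have hiJ : i ∉ ({j} : Finset ℕ) := by simp [hij]
    have hSmeas : MeasurableSet {v : ({j} : Finset ℕ) → ℝ | b < v ⟨j, Finset.mem_singleton_self j⟩} :=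
      measurableSet_lt measurable_const (measurable_pi_apply _)
    have hSgt : ∀ v ∈ {v : ({j} : Finset ℕ) → ℝ | b < v ⟨j, Finset.mem_singleton_self j⟩},
        ∀ j' : ({j} : Finset ℕ), x₀ < v j' := by
      intro v hv j'
      have hj' : j' = ⟨j, Finset.mem_singleton_self j⟩ := Subtype.ext (Finset.mem_singleton.mp j'.2)
      rw [hj']
      exact lt_trans hb hv
    have hR := hRDw i {j} hJ hiJ a ha _ hSmeas hSgt
    have he1 : {ω | a < projA A (X i ω) ∧ (fun j' : ({j} : Finset ℕ) => projA A (X (j' : ℕ) ω)) ∈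
        {v : ({j} : Finset ℕ) → ℝ | b < v ⟨j, Finset.mem_singleton_self j⟩}} =
        {ω | a < Z i ω ∧ b < Z j ω} := rfl
    have he2 : {ω | (fun j' : ({j} : Finset ℕ) => projA A (X (j' : ℕ) ω)) ∈
        {v : ({j} : Finset ℕ) → ℝ | b < v ⟨j, Finset.mem_singleton_self j⟩}} =
        {ω | b < Z j ω} := rfl
    have he3 : {ω | a < projA A (X i ω)} = {ω | a < Z i ω} := rfl
    rw [he1, he2, he3] at hR
    calc P {ω | a < Z i ω ∧ b < Z j ω}
        = ENNReal.ofReal ((P {ω | a < Z i ω ∧ b < Z j ω}).toReal) :=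
          (ENNReal.ofReal_toReal (measure_ne_top P _)).symm
      _ ≤ ENNReal.ofReal (K * (P {ω | a < Z i ω}).toReal * (P {ω | b < Z j ω}).toReal) :=
          ENNReal.ofReal_le_ofReal hR
      _ = ENNReal.ofReal K * P {ω | a < Z i ω} * P {ω | b < Z j ω} := by
          rw [ENNReal.ofReal_mul (by positivity), ENNReal.ofReal_mul hK.le,
            ENNReal.ofReal_toReal (measure_ne_top P _), ENNReal.ofReal_toReal (measure_ne_top P _)]
  -- the pairwise estimate
  have hPEij : ∀ x : ℝ, x₀ < x → ∀ i j, i ≠ j →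
      P (Ev r X τ A T x i ∩ Ev r X τ A T x j) ≤
        ENNReal.ofReal K * ∫⁻ p, h x p.1 * h x p.2 ∂(P.map (fun ω => (τ i ω, τ j ω))) := by
    intro x hx i j hij
    have hx0 : 0 < x := lt_trans hx₀ hx
    haveI : IsProbabilityMeasure (P.map (fun ω => (τ i ω, τ j ω))) :=
      Measure.isProbabilityMeasure_map ((hτmeas i).prodMk (hτmeas j)).aemeasurable
    haveI : IsProbabilityMeasure (P.map (fun ω => (Z i ω, Z j ω))) :=
      Measure.isProbabilityMeasure_map ((hZmeas i).prodMk (hZmeas j)).aemeasurable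
    have hS2m : MeasurableSet {q : (ℝ × ℝ) × (ℝ × ℝ) |
        (q.2.1 ≤ T ∧ x * Real.exp (r * q.2.1) < q.1.1) ∧
        (q.2.2 ≤ T ∧ x * Real.exp (r * q.2.2) < q.1.2)} := by
      apply MeasurableSet.inter <;> apply MeasurableSet.inter
      · exact measurableSet_le (measurable_fst.comp measurable_snd) measurable_const
      · exact measurableSet_lt (measurable_const.mul
          (Real.measurable_exp.comp (measurable_const.mul (measurable_fst.comp measurable_snd))))
          (measurable_fst.comp measurable_fst)
      · exact measurableSet_le (measurable_snd.comp measurable_snd) measurable_const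
      · exact measurableSet_lt (measurable_const.mul
          (Real.measurable_exp.comp (measurable_const.mul (measurable_snd.comp measurable_snd))))
          (measurable_snd.comp measurable_fst)
    have hpre : Ev r X τ A T x i ∩ Ev r X τ A T x j =
        (fun ω => ((Z i ω, Z j ω), (τ i ω, τ j ω))) ⁻¹' {q : (ℝ × ℝ) × (ℝ × ℝ) |
          (q.2.1 ≤ T ∧ x * Real.exp (r * q.2.1) < q.1.1) ∧
          (q.2.2 ≤ T ∧ x * Real.exp (r * q.2.2) < q.1.2)} := by
      ext ω
      rw [Set.mem_inter_iff, hEiff x hx0 i ω, hEiff x hx0 j ω]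
      simp only [Set.mem_preimage, Set.mem_setOf_eq]
    rw [hpre, ← Measure.map_apply
      (((hZmeas i).prodMk (hZmeas j)).prodMk ((hτmeas i).prodMk (hτmeas j))) hS2m,
      hmap2 i j, Measure.prod_apply_symm hS2m]
    have hb : ∀ᵐ st ∂(P.map fun ω => (τ i ω, τ j ω)),
        (P.map fun ω => (Z i ω, Z j ω)) ((fun z => (z, st)) ⁻¹' {q : (ℝ × ℝ) × (ℝ × ℝ) |
          (q.2.1 ≤ T ∧ x * Real.exp (r * q.2.1) < q.1.1) ∧
          (q.2.2 ≤ T ∧ x * Real.exp (r * q.2.2) < q.1.2)}) ≤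
        ENNReal.ofReal K * (h x st.1 * h x st.2) := by
      filter_upwards [hae_nn2 i j] with st hst
      by_cases h1 : st.1 ≤ T
      · by_cases h2 : st.2 ≤ T
        · have hpre2 : (fun z : ℝ × ℝ => (z, st)) ⁻¹' {q : (ℝ × ℝ) × (ℝ × ℝ) |
              (q.2.1 ≤ T ∧ x * Real.exp (r * q.2.1) < q.1.1) ∧
              (q.2.2 ≤ T ∧ x * Real.exp (r * q.2.2) < q.1.2)} =
              {z : ℝ × ℝ | x * Real.exp (r * st.1) < z.1 ∧ x * Real.exp (r * st.2) < z.2} := by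
            ext z; simp [h1, h2]
          have hzm : MeasurableSet {z : ℝ × ℝ | x * Real.exp (r * st.1) < z.1 ∧
              x * Real.exp (r * st.2) < z.2} :=
            (measurableSet_lt measurable_const measurable_fst).inter
              (measurableSet_lt measurable_const measurable_snd)
          rw [hpre2, Measure.map_apply ((hZmeas i).prodMk (hZmeas j)) hzm]
          have hpre3 : (fun ω => (Z i ω, Z j ω)) ⁻¹' {z : ℝ × ℝ |
              x * Real.exp (r * st.1) < z.1 ∧ x * Real.exp (r * st.2) < z.2} =
              {ω | x * Real.exp (r * st.1) < Z i ω ∧ x * Real.exp (r * st.2) < Z j ω} := rfl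
          rw [hpre3]
          have hgt1 : x₀ < x * Real.exp (r * st.1) :=
            lt_of_lt_of_le hx (le_mul_of_one_le_right hx0.le
              (Real.one_le_exp (mul_nonneg hr hst.1)))
          have hgt2 : x₀ < x * Real.exp (r * st.2) :=
            lt_of_lt_of_le hx (le_mul_of_one_le_right hx0.le
              (Real.one_le_exp (mul_nonneg hr hst.2)))
          calc P {ω | x * Real.exp (r * st.1) < Z i ω ∧ x * Real.exp (r * st.2) < Z j ω}
              ≤ ENNReal.ofReal K * P {ω | x * Real.exp (r * st.1) < Z i ω} *
                P {ω | x * Real.exp (r * st.2) < Z j ω} := hRDbound i j hij _ _ hgt1 hgt2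
            _ = ENNReal.ofReal K * (h x st.1 * h x st.2) := by
                rw [hFtail i _ (by positivity), hFtail j _ (by positivity)]
                have hh1 : h x st.1 = F ((x * Real.exp (r * st.1)) • A) := by
                  show Set.indicator (Icc (0:ℝ) T) (fun s => Ge (Real.log x + r * s)) st.1 = _
                  rw [Set.indicator_of_mem (Set.mem_Icc.mpr ⟨hst.1, h1⟩), hGe_eq x hx0]
                have hh2 : h x st.2 = F ((x * Real.exp (r * st.2)) • A) := by
                  show Set.indicator (Icc (0:ℝ) T) (fun s => Ge (Real.log x + r * s)) st.2 = _
                  rw [Set.indicator_of_mem (Set.mem_Icc.mpr ⟨hst.2, h2⟩), hGe_eq x hx0]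
                rw [hh1, hh2, mul_assoc]
        · have hpre2 : (fun z : ℝ × ℝ => (z, st)) ⁻¹' {q : (ℝ × ℝ) × (ℝ × ℝ) |
              (q.2.1 ≤ T ∧ x * Real.exp (r * q.2.1) < q.1.1) ∧
              (q.2.2 ≤ T ∧ x * Real.exp (r * q.2.2) < q.1.2)} = ∅ := by
            ext z; simp [h2]
          rw [hpre2, measure_empty]
          exact zero_le
      · have hpre2 : (fun z : ℝ × ℝ => (z, st)) ⁻¹' {q : (ℝ × ℝ) × (ℝ × ℝ) |
            (q.2.1 ≤ T ∧ x * Real.exp (r * q.2.1) < q.1.1) ∧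
            (q.2.2 ≤ T ∧ x * Real.exp (r * q.2.2) < q.1.2)} = ∅ := by
          ext z; simp [h1]
        rw [hpre2, measure_empty]
        exact zero_le
    calc (∫⁻ st, (P.map fun ω => (Z i ω, Z j ω)) ((fun z => (z, st)) ⁻¹' _)
          ∂(P.map fun ω => (τ i ω, τ j ω)))
        ≤ ∫⁻ st, ENNReal.ofReal K * (h x st.1 * h x st.2) ∂(P.map fun ω => (τ i ω, τ j ω)) :=
          lintegral_mono_ae hb
      _ = ENNReal.ofReal K * ∫⁻ st, h x st.1 * h x st.2 ∂(P.map fun ω => (τ i ω, τ j ω)) :=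
          lintegral_const_mul' _ _ ENNReal.ofReal_ne_top
    -- union bound for `J ≥ 2`
  have hJsub : ∀ x : ℝ, {ω | 2 ≤ Jcount r X τ A T x ω} ⊆
      ⋃ p : {p : ℕ × ℕ // p.1 ≠ p.2}, (Ev r X τ A T x p.1.1 ∩ Ev r X τ A T x p.1.2) := by
    intro x ω hω
    simp only [Set.mem_setOf_eq] at hω
    by_contra hnot
    simp only [Set.mem_iUnion, not_exists] at hnot
    have huniq : ∀ i j : ℕ, ω ∈ Ev r X τ A T x i → ω ∈ Ev r X τ A T x j → i = j := by
      intro i j hi hj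
      by_contra hij
      exact hnot ⟨(i, j), hij⟩ ⟨hi, hj⟩
    rw [Jcount_eq] at hω
    by_cases hex : ∃ i, ω ∈ Ev r X τ A T x i
    · obtain ⟨i0, hi0⟩ := hex
      have hz : ∀ i, i ≠ i0 → Set.indicator (Ev r X τ A T x i) (fun _ => (1:ℝ≥0∞)) ω = 0 := by
        intro i hi
        exact Set.indicator_of_notMem (fun hmem => hi (huniq i i0 hmem hi0)) _
      rw [tsum_eq_single i0 hz] at hω
      have hle1 : Set.indicator (Ev r X τ A T x i0) (fun _ => (1:ℝ≥0∞)) ω ≤ 1 := by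
        rw [Set.indicator_apply]
        split <;> simp
      have h21 : (2:ℝ≥0∞) ≤ 1 := le_trans hω hle1
      norm_num at h21
    · push_neg at hex
      have hz : ∀ i, Set.indicator (Ev r X τ A T x i) (fun _ => (1:ℝ≥0∞)) ω = 0 :=
        fun i => Set.indicator_of_notMem (hex i) _
      rw [tsum_congr hz, tsum_zero] at hω
      norm_num at hω
  -- the main `ℝ≥0∞` bound
  have hmain : ∀ x : ℝ, x₀ < x →
      P {ω | 2 ≤ Jcount r X τ A T x ω} ≤
        ENNReal.ofReal K * (ENNReal.ofReal C * (∑' i, P (Ev r X τ A T x i)) ^ 2) := by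
    intro x hx
    have hx0 : 0 < x := lt_trans hx₀ hx
    have step1 : P {ω | 2 ≤ Jcount r X τ A T x ω} ≤
        ∑' p : {p : ℕ × ℕ // p.1 ≠ p.2}, P (Ev r X τ A T x p.1.1 ∩ Ev r X τ A T x p.1.2) :=
      (measure_mono (hJsub x)).trans (measure_iUnion_le _)
    have step2 : ∑' p : {p : ℕ × ℕ // p.1 ≠ p.2},
        P (Ev r X τ A T x p.1.1 ∩ Ev r X τ A T x p.1.2) ≤
        ENNReal.ofReal K * ∫⁻ p, h x p.1 * h x p.2 ∂(secondFactorial P τ) := by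
      calc ∑' p : {p : ℕ × ℕ // p.1 ≠ p.2}, P (Ev r X τ A T x p.1.1 ∩ Ev r X τ A T x p.1.2)
          ≤ ∑' p : {p : ℕ × ℕ // p.1 ≠ p.2}, ENNReal.ofReal K *
            ∫⁻ q, h x q.1 * h x q.2 ∂(P.map (fun ω => (τ p.1.1 ω, τ p.1.2 ω))) :=
            ENNReal.tsum_le_tsum fun p => hPEij x hx p.1.1 p.1.2 p.2
        _ = ENNReal.ofReal K * ∑' p : {p : ℕ × ℕ // p.1 ≠ p.2},
            ∫⁻ q, h x q.1 * h x q.2 ∂(P.map (fun ω => (τ p.1.1 ω, τ p.1.2 ω))) :=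
            ENNReal.tsum_mul_left
        _ = ENNReal.ofReal K * ∫⁻ p, h x p.1 * h x p.2 ∂(secondFactorial P τ) := by
            rw [secondFactorial, lintegral_sum_measure]
    have hRmeas : MeasurableSet (Icc (0:ℝ) T ×ˢ Icc (0:ℝ) T) :=
      measurableSet_Icc.prod measurableSet_Icc
    have hfind : ∀ p : ℝ × ℝ, h x p.1 * h x p.2 =
        Set.indicator (Icc (0:ℝ) T ×ˢ Icc (0:ℝ) T) (fun p => h x p.1 * h x p.2) p := by
      intro p
      by_cases hp : p ∈ Icc (0:ℝ) T ×ˢ Icc (0:ℝ) T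
      · rw [Set.indicator_of_mem hp]
      · rw [Set.indicator_of_notMem hp]
        rcases not_and_or.mp ((Set.mem_prod).not.mp hp) with h1 | h1
        · rw [show h x p.1 = 0 from Set.indicator_of_notMem h1 _, zero_mul]
        · rw [show h x p.2 = 0 from Set.indicator_of_notMem h1 _, mul_zero]
    have hcomp : ∫⁻ p, h x p.1 * h x p.2 ∂(secondFactorial P τ) ≤
        ENNReal.ofReal C * ∫⁻ p, h x p.1 * h x p.2 ∂(nuProd P τ) := by
      have hle : (secondFactorial P τ).restrict (Icc (0:ℝ) T ×ˢ Icc (0:ℝ) T) ≤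
          (ENNReal.ofReal C • nuProd P τ).restrict (Icc (0:ℝ) T ×ˢ Icc (0:ℝ) T) := by
        refine Measure.le_iff.mpr fun s hs => ?_
        rw [Measure.restrict_apply hs, Measure.restrict_apply hs, Measure.smul_apply,
          smul_eq_mul]
        exact h32 _ (hs.inter hRmeas) Set.inter_subset_right
      calc ∫⁻ p, h x p.1 * h x p.2 ∂(secondFactorial P τ)
          = ∫⁻ p, Set.indicator (Icc (0:ℝ) T ×ˢ Icc (0:ℝ) T) (fun p => h x p.1 * h x p.2) p
            ∂(secondFactorial P τ) := lintegral_congr hfind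
        _ = ∫⁻ p in Icc (0:ℝ) T ×ˢ Icc (0:ℝ) T, h x p.1 * h x p.2 ∂(secondFactorial P τ) :=
            lintegral_indicator hRmeas _
        _ ≤ ∫⁻ p in Icc (0:ℝ) T ×ˢ Icc (0:ℝ) T, h x p.1 * h x p.2
            ∂(ENNReal.ofReal C • nuProd P τ) := lintegral_mono' hle le_rfl
        _ = ENNReal.ofReal C * ∫⁻ p in Icc (0:ℝ) T ×ˢ Icc (0:ℝ) T, h x p.1 * h x p.2
            ∂(nuProd P τ) := by rw [Measure.restrict_smul, lintegral_smul_measure, smul_eq_mul]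
        _ ≤ ENNReal.ofReal C * ∫⁻ p, h x p.1 * h x p.2 ∂(nuProd P τ) :=
            mul_le_mul_right (lintegral_mono' Measure.restrict_le_self le_rfl) _
    have hprod : ∫⁻ p, h x p.1 * h x p.2 ∂(nuProd P τ) =
        (∑' i, ∫⁻ s, h x s ∂(P.map (τ i))) ^ 2 := by
      rw [nuProd, lintegral_sum_measure]
      have hpp : ∀ p : ℕ × ℕ, ∫⁻ q, h x q.1 * h x q.2
          ∂(mprod (P.map (τ p.1)) (P.map (τ p.2))) =
          (∫⁻ s, h x s ∂(P.map (τ p.1))) * ∫⁻ s, h x s ∂(P.map (τ p.2)) := by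
        intro p
        haveI := hPmapτ p.1
        haveI := hPmapτ p.2
        have hm : mprod (P.map (τ p.1)) (P.map (τ p.2)) =
            (P.map (τ p.1)).prod (P.map (τ p.2)) := by
          rw [mprod, Measure.prod_def]
        rw [hm]
        exact lintegral_prod_mul (hhmeas x).aemeasurable (hhmeas x).aemeasurable
      have hsq : ∀ a : ℕ → ℝ≥0∞, ∑' p : ℕ × ℕ, a p.1 * a p.2 = (∑' i, a i) ^ 2 := by
        intro a
        calc ∑' p : ℕ × ℕ, a p.1 * a p.2 = ∑' (i) (j), a i * a j := ENNReal.tsum_prod'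
          _ = ∑' i, a i * ∑' j, a j := tsum_congr fun i => ENNReal.tsum_mul_left
          _ = (∑' i, a i) * ∑' j, a j := ENNReal.tsum_mul_right
          _ = (∑' i, a i) ^ 2 := (sq _).symm
      rw [tsum_congr hpp]
      exact hsq fun i => ∫⁻ s, h x s ∂(P.map (τ i))
    have hΛ : (∑' i, ∫⁻ s, h x s ∂(P.map (τ i))) = ∑' i, P (Ev r X τ A T x i) :=
      tsum_congr fun i => (hPEi x hx0 i).symm
    calc P {ω | 2 ≤ Jcount r X τ A T x ω}
        ≤ ENNReal.ofReal K * ∫⁻ p, h x p.1 * h x p.2 ∂(secondFactorial P τ) :=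
          step1.trans step2
      _ ≤ ENNReal.ofReal K * (ENNReal.ofReal C *
          (∑' i, ∫⁻ s, h x s ∂(P.map (τ i))) ^ 2) :=
          mul_le_mul_right (le_of_le_of_eq hcomp (by rw [hprod])) _
      _ = ENNReal.ofReal K * (ENNReal.ofReal C * (∑' i, P (Ev r X τ A T x i)) ^ 2) := by
          rw [hΛ]
    -- finiteness of Λ
  have hΛfin : ∀ x : ℝ, (∑' i, P (Ev r X τ A T x i)) ≠ ⊤ :=
    fun x => ne_top_of_le_ne_top (hmfin T)
      (ENNReal.tsum_le_tsum fun i => measure_mono fun ω hω => hω.1)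
  have hLeq : ∀ x : ℝ, (∑' i, (P (Ev r X τ A T x i)).toReal)
      = (∑' i, P (Ev r X τ A T x i)).toReal :=
    fun x => (ENNReal.tsum_toReal_eq fun i => measure_ne_top P _).symm
  -- Part 1 : positivity
  have hpos : ∀ x : ℝ, 0 < x → 0 < ∑' i, (P (Ev r X τ A T x i)).toReal := by
    intro x hx
    rw [hLeq x]
    refine ENNReal.toReal_pos ?_ (hΛfin x)
    obtain ⟨i0, hi0⟩ : ∃ i, P {ω | τ i ω ≤ T} ≠ 0 := by
      by_contra hcon
      push_neg at hcon
      rw [ENNReal.tsum_eq_zero.mpr hcon] at hmT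
      exact lt_irrefl 0 hmT
    refine ne_of_gt (lt_of_lt_of_le ?_ (ENNReal.le_tsum i0))
    have hsub : Z i0 ⁻¹' Ioi (x * Real.exp (r * T)) ∩ τ i0 ⁻¹' Iic T ⊆ Ev r X τ A T x i0 := by
      rintro ω ⟨h1, h2⟩
      rw [Set.mem_preimage, Set.mem_Ioi] at h1
      rw [Set.mem_preimage, Set.mem_Iic] at h2
      refine (hEiff x hx i0 ω).mpr ⟨h2, ?_⟩
      have hee : Real.exp (r * τ i0 ω) ≤ Real.exp (r * T) :=
        Real.exp_le_exp.mpr (mul_le_mul_of_nonneg_left h2 hr)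
      have := mul_le_mul_of_nonneg_left hee hx.le
      linarith
    refine lt_of_lt_of_le ?_ (measure_mono hsub)
    rw [(hindepZτ i0).measure_inter_preimage_eq_mul _ _ measurableSet_Ioi measurableSet_Iic]
    have he : Z i0 ⁻¹' Ioi (x * Real.exp (r * T)) = {ω | x * Real.exp (r * T) < Z i0 ω} := rfl
    rw [he, hFtail i0 _ (by positivity)]
    exact ENNReal.mul_pos (hFA _ (by positivity)).ne' hi0
  -- Part 2 : Λ tends to zero
  have htail0 : Tendsto (fun y : ℝ => F {z : Fin d → ℝ | y ≤ ‖z‖}) atTop (𝓝 0) := by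
    have hmeasB : ∀ y : ℝ, NullMeasurableSet {z : Fin d → ℝ | y ≤ ‖z‖} F := fun y =>
      (measurableSet_le measurable_const measurable_norm).nullMeasurableSet
    have hanti : Antitone (fun y : ℝ => {z : Fin d → ℝ | y ≤ ‖z‖}) :=
      fun y y' hyy' z hz => le_trans hyy' hz
    have hlim := tendsto_measure_iInter_atTop (μ := F) hmeasB hanti ⟨0, measure_ne_top F _⟩
    have hempty : ⋂ y : ℝ, {z : Fin d → ℝ | y ≤ ‖z‖} = ∅ := by
      ext z
      simp only [Set.mem_iInter, Set.mem_setOf_eq, Set.mem_empty_iff_false, iff_false,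
        not_forall, not_le]
      exact ⟨‖z‖ + 1, by linarith⟩
    rw [hempty, measure_empty] at hlim
    exact hlim
  have hub : ∀ x : ℝ, 0 < x → (∑' i, P (Ev r X τ A T x i)) ≤
      F {z : Fin d → ℝ | x * ε ≤ ‖z‖} * ∑' i, P {ω | τ i ω ≤ T} := by
    intro x hx
    have hstep : ∀ i, P (Ev r X τ A T x i) ≤
        F {z : Fin d → ℝ | x * ε ≤ ‖z‖} * P {ω | τ i ω ≤ T} := by
      intro i
      have hsub : Ev r X τ A T x i ⊆ Z i ⁻¹' Ioi x ∩ τ i ⁻¹' Iic T := by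
        intro ω hω
        obtain ⟨h1, h2⟩ := (hEiff x hx i ω).mp hω
        constructor
        · rw [Set.mem_preimage, Set.mem_Ioi]
          have h3 : (1:ℝ) ≤ Real.exp (r * τ i ω) := Real.one_le_exp (mul_nonneg hr (hτnn i ω))
          nlinarith
        · exact h1
      refine (measure_mono hsub).trans ?_
      rw [(hindepZτ i).measure_inter_preimage_eq_mul _ _ measurableSet_Ioi measurableSet_Iic]
      have he : Z i ⁻¹' Ioi x = {ω | x < Z i ω} := rfl
      rw [he, hFtail i x hx]
      refine mul_le_mul_left (measure_mono ?_) _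
      rintro z ⟨a, ha, rfl⟩
      show x * ε ≤ ‖x • a‖
      rw [norm_smul, Real.norm_eq_abs, abs_of_pos hx]
      exact mul_le_mul_of_nonneg_left (hεA a ha) hx.le
    exact (ENNReal.tsum_le_tsum hstep).trans (le_of_eq ENNReal.tsum_mul_left)
  have htendΛ : Tendsto (fun x : ℝ => ∑' i, P (Ev r X τ A T x i)) atTop (𝓝 0) := by
    rw [ENNReal.tendsto_nhds_zero]
    intro δ hδ
    have hcomp : Tendsto (fun x : ℝ => x * ε) atTop atTop :=
      Tendsto.atTop_mul_const hε tendsto_id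
    have h1 : Tendsto (fun x : ℝ => F {z : Fin d → ℝ | x * ε ≤ ‖z‖} *
        ∑' i, P {ω | τ i ω ≤ T}) atTop (𝓝 0) := by
      have h2 := ENNReal.Tendsto.mul_const (htail0.comp hcomp) (Or.inr (hmfin T))
      simpa using h2
    filter_upwards [(ENNReal.tendsto_nhds_zero.mp h1) δ hδ, eventually_gt_atTop (0:ℝ)]
      with x hx1 hx2
    exact (hub x hx2).trans hx1
  have htendL : Tendsto (fun x : ℝ => ∑' i, (P (Ev r X τ A T x i)).toReal) atTop (𝓝 0) := by
    have hfun : (fun x : ℝ => ∑' i, (P (Ev r X τ A T x i)).toReal) =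
        fun x : ℝ => (∑' i, P (Ev r X τ A T x i)).toReal := funext hLeq
    rw [hfun]
    have := (ENNReal.tendsto_toReal (by norm_num : (0:ℝ≥0∞) ≠ ⊤)).comp htendΛ
    simpa using (show Tendsto (fun x => (∑' (i : ℕ), P (Ev r X τ A T x i)).toReal) atTop (𝓝 (0:ℝ≥0∞).toReal) from this)
  -- Part 3 : the eventual bound
  have hbound3 : ∀ x : ℝ, x₀ < x →
      (P {ω | 2 ≤ Jcount r X τ A T x ω}).toReal ≤
        K * C * (∑' i, (P (Ev r X τ A T x i)).toReal) ^ 2 := by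
    intro x hx
    have h1 := hmain x hx
    have hne : ENNReal.ofReal K * (ENNReal.ofReal C * (∑' i, P (Ev r X τ A T x i)) ^ 2) ≠ ⊤ :=
      ENNReal.mul_ne_top ENNReal.ofReal_ne_top
        (ENNReal.mul_ne_top ENNReal.ofReal_ne_top (ENNReal.pow_ne_top (hΛfin x)))
    calc (P {ω | 2 ≤ Jcount r X τ A T x ω}).toReal
        ≤ (ENNReal.ofReal K * (ENNReal.ofReal C * (∑' i, P (Ev r X τ A T x i)) ^ 2)).toReal :=
          ENNReal.toReal_mono hne h1
      _ = K * C * (∑' i, (P (Ev r X τ A T x i)).toReal) ^ 2 := by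
          rw [ENNReal.toReal_mul, ENNReal.toReal_mul, ENNReal.toReal_pow,
            ENNReal.toReal_ofReal hK.le, ENNReal.toReal_ofReal hC, ← hLeq x]
          ring
  refine ⟨fun x hx => hpos x hx, htendL, ⟨K * C, ?_⟩, ?_⟩
  · filter_upwards [eventually_gt_atTop x₀] with x hx
    exact hbound3 x hx
  · apply squeeze_zero' (g := fun x : ℝ => K * C * (∑' i, (P (Ev r X τ A T x i)).toReal))
    · exact Eventually.of_forall fun x =>
        div_nonneg ENNReal.toReal_nonneg (tsum_nonneg fun i => ENNReal.toReal_nonneg)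
    · filter_upwards [eventually_gt_atTop x₀] with x hx
      have hx0 : 0 < x := lt_trans hx₀ hx
      have hL := hpos x hx0
      show (P {ω | 2 ≤ Jcount r X τ A T x ω}).toReal /
          (∑' i, (P (Ev r X τ A T x i)).toReal) ≤
        K * C * (∑' i, (P (Ev r X τ A T x i)).toReal)
      rw [div_le_iff₀ hL]
      calc (P {ω | 2 ≤ Jcount r X τ A T x ω}).toReal
          ≤ K * C * (∑' i, (P (Ev r X τ A T x i)).toReal) ^ 2 := hbound3 x hx
        _ = K * C * (∑' i, (P (Ev r X τ A T x i)).toReal) *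
            (∑' i, (P (Ev r X τ A T x i)).toReal) := by ring
    · have := htendL.const_mul (K * C)
      simpa using this
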